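/- For j, m ∈ ℤ_{≥0}, ⟨(a⁺)^{2j} k^{2m}⟩₂₂ = x^j p^m Σ_{i=0}^j (-1)^i p^{2i²} [ (p⁴;p⁴)_j (x;p⁴)_{m+i} ] / [ (p⁴;p⁴)_i (p⁴;p⁴)_{j-i} (xp²;p⁴)_{m+i} ], where ⟨𝒪⟩₂₂ = ⟨χ̄₂(x)|𝒪|χ₂(1)⟩/⟨χ̄₂(x)|χ₂(1)⟩ and ⟨χ̄₂(x)|χ₂(1)⟩ = (px²;p⁴)_∞/(x;p⁴)_∞. -/

import Mathlib

open Finset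

noncomputable def aPlus (p : ℝ) (v : ℕ → ℂ) : ℕ → ℂ := fun m =>
  match m with
  | 0 => 0
  | Nat.succ m => ((Real.sqrt (1 - p ^ (2 * m + 2)) : ℝ) : ℂ) * v m

noncomputable def kOp (p : ℝ) (v : ℕ → ℂ) : ℕ → ℂ := fun m =>
  ((p : ℂ) ^ m * ((Real.sqrt p : ℝ) : ℂ)) * v m

noncomputable def qPoch (a q : ℝ) (m : ℕ) : ℝ := ∏ i ∈ Finset.range m, (1 - a * q ^ i)

/-- Coefficients of `|χ₂(x)⟩ = (x(a⁺)²;p⁴)_∞^{-1}|0⟩`; the dual vector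
`⟨χ̄₂(x)| = ⟨0|(x(a⁻)²;p⁴)_∞^{-1}` has the same coefficients. -/
noncomputable def chi2 (p x : ℝ) : ℕ → ℂ := fun m =>
  if m % 2 = 0 then
    (x : ℂ) ^ (m / 2) * ((Real.sqrt (qPoch (p ^ 2) (p ^ 2) m) : ℝ) : ℂ)
      / ((qPoch (p ^ 4) (p ^ 4) (m / 2) : ℝ) : ℂ)
  else 0

noncomputable def pairF (f g : ℕ → ℂ) : ℂ := ∑' n : ℕ, f n * g n

lemma qPoch_zero (a q : ℝ) : qPoch a q 0 = 1 := by simp [qPoch]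

lemma qPoch_succ (a q : ℝ) (n : ℕ) : qPoch a q (n+1) = qPoch a q n * (1 - a * q ^ n) :=
  Finset.prod_range_succ _ _

lemma qPoch_succ' (a q : ℝ) (n : ℕ) : qPoch a q (n+1) = (1 - a) * qPoch (a*q) q n := by
  rw [qPoch, Finset.prod_range_succ']
  simp only [pow_zero, mul_one, qPoch]
  rw [mul_comm]
  congr 1
  exact Finset.prod_congr rfl fun i _ => by rw [pow_succ']; ring

lemma qPoch_add (c q : ℝ) (a b : ℕ) :
    qPoch c q (a+b) = qPoch c q a * qPoch (c * q^a) q b := by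
  rw [qPoch, Finset.prod_range_add]
  congr 1
  exact Finset.prod_congr rfl fun i _ => by rw [pow_add]; ring

lemma qPoch_pos {c q : ℝ} (hc0 : 0 ≤ c) (hc1 : c < 1) (hq0 : 0 ≤ q) (hq1 : q ≤ 1) (n : ℕ) :
    0 < qPoch c q n := by
  apply Finset.prod_pos
  intro i _
  have h1 : q ^ i ≤ 1 := pow_le_one₀ hq0 hq1
  have h2 : c * q ^ i ≤ c := by nlinarith [pow_nonneg hq0 i]
  linarith

lemma qPoch_le_one {c q : ℝ} (hc0 : 0 ≤ c) (hc1 : c < 1) (hq0 : 0 ≤ q) (hq1 : q ≤ 1) (n : ℕ) :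
    qPoch c q n ≤ 1 := by
  apply Finset.prod_le_one
  · intro i _
    have h1 : q ^ i ≤ 1 := pow_le_one₀ hq0 hq1
    have h2 : c * q ^ i ≤ c := by nlinarith [pow_nonneg hq0 i]
    linarith
  · intro i _
    have : 0 ≤ c * q ^ i := by positivity
    linarith

noncomputable def gTerm (c q t : ℝ) (n : ℕ) : ℝ := qPoch c q n * t ^ n / qPoch q q n

lemma gTerm_nonneg {c q t : ℝ} (hc0 : 0 ≤ c) (hc1 : c < 1) (hq0 : 0 < q) (hq1 : q < 1)
    (ht0 : 0 ≤ t) (n : ℕ) : 0 ≤ gTerm c q t n := by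
  have h1 := qPoch_pos hc0 hc1 hq0.le hq1.le n
  have h2 := qPoch_pos hq0.le hq1 hq0.le hq1.le n
  have h3 : 0 ≤ t ^ n := pow_nonneg ht0 n
  exact div_nonneg (mul_nonneg h1.le h3) h2.le

lemma summable_gTerm {c q t : ℝ} (hc0 : 0 ≤ c) (hc1 : c < 1) (hq0 : 0 < q) (hq1 : q < 1)
    (ht0 : 0 ≤ t) (ht1 : t < 1) : Summable (gTerm c q t) := by
  apply summable_of_ratio_norm_eventually_le (r := (1+t)/2) (by linarith)
  have hq' : Filter.Tendsto (fun n : ℕ => q ^ (n+1)) Filter.atTop (nhds 0) := by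
    have := tendsto_pow_atTop_nhds_zero_of_lt_one hq0.le hq1
    exact this.comp (Filter.tendsto_add_atTop_nat 1)
  have hev : ∀ᶠ n : ℕ in Filter.atTop, q ^ (n+1) ≤ (1-t)/2 :=
    hq'.eventually (eventually_le_nhds (by linarith))
  filter_upwards [hev] with n hn
  have hQn := qPoch_pos hq0.le hq1 hq0.le hq1.le n
  have hCn := qPoch_pos hc0 hc1 hq0.le hq1.le n
  have hqn1 : (0:ℝ) < 1 - q^(n+1) := by
    have : q^(n+1) < 1 := pow_lt_one₀ hq0.le hq1 (by omega)
    linarith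
  rw [Real.norm_of_nonneg (gTerm_nonneg hc0 hc1 hq0 hq1 ht0 _),
      Real.norm_of_nonneg (gTerm_nonneg hc0 hc1 hq0 hq1 ht0 _)]
  have hstep : gTerm c q t (n+1) = gTerm c q t n * ((1 - c*q^n) * t / (1 - q^(n+1))) := by
    unfold gTerm
    rw [qPoch_succ c, qPoch_succ q]
    have : 1 - q * q ^ n = 1 - q ^ (n+1) := by rw [pow_succ]; ring
    rw [this]
    field_simp
    ring
  rw [hstep]
  have hg := gTerm_nonneg hc0 hc1 hq0 hq1 ht0 n
  have hb : (1 - c*q^n) * t / (1 - q^(n+1)) ≤ (1+t)/2 := by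
    rw [div_le_iff₀ hqn1]
    have h1 : 0 ≤ c * q^n := by positivity
    nlinarith [sq_nonneg (1-t), pow_nonneg hq0.le (n+1)]
  calc gTerm c q t n * ((1 - c*q^n) * t / (1 - q^(n+1)))
      ≤ gTerm c q t n * ((1+t)/2) := by nlinarith
    _ = (1+t)/2 * gTerm c q t n := by ring

noncomputable def fSum (c q t : ℝ) : ℝ := ∑' n, gTerm c q t n

noncomputable def gsh (c q t : ℝ) : ℕ → ℝ := fun n =>
  match n with
  | 0 => 0
  | n+1 => gTerm c q t n

lemma summable_gsh {c q t : ℝ} (h : Summable (gTerm c q t)) : Summable (gsh c q t) := by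
  rw [← summable_nat_add_iff 1]
  exact h

lemma tsum_gsh {c q t : ℝ} (h : Summable (gTerm c q t)) : ∑' n, gsh c q t n = fSum c q t := by
  rw [Summable.tsum_eq_zero_add (summable_gsh h)]
  simp [gsh, fSum]

lemma eqA {c q t : ℝ} (hc0 : 0 ≤ c) (hc1 : c < 1) (hq0 : 0 < q) (hq1 : q < 1)
    (ht0 : 0 ≤ t) (ht1 : t < 1) :
    fSum c q t = (1 - c*t) * fSum (c*q) q t := by
  have hcq0 : 0 ≤ c*q := by positivity
  have hcq1 : c*q < 1 := by nlinarith
  have hS : Summable (gTerm (c*q) q t) := summable_gTerm hcq0 hcq1 hq0 hq1 ht0 ht1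
  have hSh : Summable (gsh (c*q) q t) := summable_gsh hS
  have key : ∀ n, gTerm c q t n = gTerm (c*q) q t n - (c*t) * gsh (c*q) q t n := by
    intro n
    cases n with
    | zero => simp [gTerm, gsh, qPoch_zero]
    | succ n =>
      show gTerm c q t (n+1) = gTerm (c*q) q t (n+1) - (c*t) * gTerm (c*q) q t n
      unfold gTerm
      rw [qPoch_succ' c, qPoch_succ (c*q), qPoch_succ q]
      have hQ := qPoch_pos hq0.le hq1 hq0.le hq1.le n
      have hq1' : (0:ℝ) < 1 - q * q^n := by
        have : q * q^n < 1 := by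
          have e1 : q ^ n ≤ 1 := pow_le_one₀ hq0.le hq1.le
          have e2 : 0 ≤ q ^ n := pow_nonneg hq0.le n
          nlinarith
        linarith
      field_simp
      ring
  calc fSum c q t = ∑' n, (gTerm (c*q) q t n - (c*t) * gsh (c*q) q t n) := by
        unfold fSum; exact tsum_congr key
    _ = (∑' n, gTerm (c*q) q t n) - ∑' n, (c*t) * gsh (c*q) q t n :=
        Summable.tsum_sub hS (hSh.mul_left _)
    _ = (1 - c*t) * fSum (c*q) q t := by
        rw [tsum_mul_left, tsum_gsh hS]
        unfold fSum
        ring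

lemma eqB {c q t : ℝ} (hc0 : 0 ≤ c) (hc1 : c < 1) (hq0 : 0 < q) (hq1 : q < 1)
    (ht0 : 0 ≤ t) (ht1 : t < 1) :
    (1 - t) * fSum c q t = (1 - c*t) * fSum c q (q*t) := by
  have hqt0 : 0 ≤ q*t := by positivity
  have hqt1 : q*t < 1 := by nlinarith
  have hS1 : Summable (gTerm c q t) := summable_gTerm hc0 hc1 hq0 hq1 ht0 ht1
  have hS2 : Summable (gTerm c q (q*t)) := summable_gTerm hc0 hc1 hq0 hq1 hqt0 hqt1
  have key : ∀ n, gTerm c q t n - t * gsh c q t n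
      = gTerm c q (q*t) n - (c*t) * gsh c q (q*t) n := by
    intro n
    cases n with
    | zero => simp [gTerm, gsh, qPoch_zero]
    | succ n =>
      show gTerm c q t (n+1) - t * gTerm c q t n
          = gTerm c q (q*t) (n+1) - (c*t) * gTerm c q (q*t) n
      unfold gTerm
      rw [qPoch_succ c, qPoch_succ q]
      have hQ := qPoch_pos hq0.le hq1 hq0.le hq1.le n
      have hq1' : (0:ℝ) < 1 - q * q^n := by
        have e1 : q ^ n ≤ 1 := pow_le_one₀ hq0.le hq1.le
        have e2 : 0 ≤ q ^ n := pow_nonneg hq0.le n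
        nlinarith
      rw [mul_pow, mul_pow]
      have hne : 1 - q ^ n * q ≠ 0 := by rw [mul_comm]; exact hq1'.ne'
      field_simp
      ring
  have lhs_eq : (1 - t) * fSum c q t = ∑' n, (gTerm c q t n - t * gsh c q t n) := by
    rw [Summable.tsum_sub hS1 ((summable_gsh hS1).mul_left _), tsum_mul_left, tsum_gsh hS1]
    unfold fSum; ring
  have rhs_eq : (1 - c*t) * fSum c q (q*t) = ∑' n, (gTerm c q (q*t) n - (c*t) * gsh c q (q*t) n) := by
    rw [Summable.tsum_sub hS2 ((summable_gsh hS2).mul_left _), tsum_mul_left, tsum_gsh hS2]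
    unfold fSum; ring
  rw [lhs_eq, rhs_eq]
  exact tsum_congr key

lemma fSum_shift_c {q t : ℝ} (hq0 : 0 < q) (hq1 : q < 1) (ht0 : 0 ≤ t) (ht1 : t < 1)
    (j : ℕ) : ∀ c : ℝ, 0 ≤ c → c < 1 →
    fSum c q t = qPoch (c*t) q j * fSum (c*q^j) q t := by
  induction j with
  | zero => intro c _ _; simp [qPoch_zero]
  | succ j ih =>
    intro c hc0 hc1
    have hcq0 : 0 ≤ c*q := by positivity
    have hcq1 : c*q < 1 := by nlinarith
    rw [eqA hc0 hc1 hq0 hq1 ht0 ht1, ih (c*q) hcq0 hcq1]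
    have h1 : c*q*q^j = c*q^(j+1) := by rw [pow_succ]; ring
    have h2 : qPoch (c*t) q (j+1) = (1 - c*t) * qPoch (c*t*q) q j := qPoch_succ' _ _ _
    rw [h1, h2]
    have : c*q*t = c*t*q := by ring
    rw [this]
    ring

lemma fSum_shift_t {c q : ℝ} (hq0 : 0 < q) (hq1 : q < 1) (hc0 : 0 ≤ c) (hc1 : c < 1)
    (m : ℕ) : ∀ t : ℝ, 0 ≤ t → t < 1 →
    qPoch t q m * fSum c q t = qPoch (c*t) q m * fSum c q (q^m * t) := by
  induction m with
  | zero => intro t _ _; simp [qPoch_zero]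
  | succ m ih =>
    intro t ht0 ht1
    have hqt0 : 0 ≤ q*t := by positivity
    have hqt1 : q*t < 1 := by nlinarith
    have h1 : qPoch t q (m+1) = (1 - t) * qPoch (t*q) q m := qPoch_succ' _ _ _
    have h2 : qPoch (c*t) q (m+1) = (1 - c*t) * qPoch (c*t*q) q m := qPoch_succ' _ _ _
    rw [h1, h2]
    have e1 : qPoch (t*q) q m * ((1-t) * fSum c q t) =
        qPoch (t*q) q m * ((1 - c*t) * fSum c q (q*t)) := by
      rw [eqB hc0 hc1 hq0 hq1 ht0 ht1]
    have e2 := ih (q*t) hqt0 hqt1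
    have e3 : t*q = q*t := by ring
    have e4 : c*(q*t) = c*t*q := by ring
    have e5 : q^m*(q*t) = q^(m+1)*t := by rw [pow_succ]; ring
    rw [e3] at e1
    rw [e4, e5] at e2
    calc (1 - t) * qPoch (t*q) q m * fSum c q t
        = qPoch (t*q) q m * ((1-t) * fSum c q t) := by ring
      _ = qPoch (t*q) q m * ((1 - c*t) * fSum c q (q*t)) := by rw [e3]; exact e1
      _ = (1 - c*t) * (qPoch (q*t) q m * fSum c q (q*t)) := by rw [e3]; ring
      _ = (1 - c*t) * (qPoch (c*t*q) q m * fSum c q (q^(m+1)*t)) := by rw [e2]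
      _ = (1 - c*t) * qPoch (c*t*q) q m * fSum c q (q^(m+1)*t) := by ring

lemma fSum_ge_one {c q t : ℝ} (hc0 : 0 ≤ c) (hc1 : c < 1) (hq0 : 0 < q) (hq1 : q < 1)
    (ht0 : 0 ≤ t) (ht1 : t < 1) : 1 ≤ fSum c q t := by
  have hS := summable_gTerm hc0 hc1 hq0 hq1 ht0 ht1
  have h0 : gTerm c q t 0 = 1 := by simp [gTerm, qPoch_zero]
  have := Summable.le_tsum hS 0 (fun j _ => gTerm_nonneg hc0 hc1 hq0 hq1 ht0 j)
  rw [h0] at this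
  exact this

lemma fSum_eval {a q x : ℝ} (ha0 : 0 ≤ a) (ha1 : a < 1) (hq0 : 0 < q) (hq1 : q < 1)
    (hx0 : 0 ≤ x) (hx1 : x < 1) (j m : ℕ) :
    qPoch x q m * fSum a q x = qPoch (a*x) q (j+m) * fSum (a*q^j) q (q^m * x) := by
  have hqj0 : 0 ≤ a*q^j := by positivity
  have hqj1 : a*q^j < 1 := by
    have e1 : q ^ j ≤ 1 := pow_le_one₀ hq0.le hq1.le
    have e2 : 0 ≤ q ^ j := pow_nonneg hq0.le j
    nlinarith
  have h1 := fSum_shift_c hq0 hq1 hx0 hx1 j a ha0 ha1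
  have h2 := fSum_shift_t hq0 hq1 hqj0 hqj1 m x hx0 hx1
  have h3 : qPoch (a*x) q (j+m) = qPoch (a*x) q j * qPoch (a*x*q^j) q m := qPoch_add _ _ _ _
  have h4 : a*q^j*x = a*x*q^j := by ring
  calc qPoch x q m * fSum a q x
      = qPoch (a*x) q j * (qPoch x q m * fSum (a*q^j) q x) := by rw [h1]; ring
    _ = qPoch (a*x) q j * (qPoch (a*q^j*x) q m * fSum (a*q^j) q (q^m*x)) := by rw [h2]
    _ = qPoch (a*x) q (j+m) * fSum (a*q^j) q (q^m * x) := by rw [h3, h4]; ring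

noncomputable def qb (q : ℝ) : ℕ → ℕ → ℝ
  | 0, 0 => 1
  | 0, _+1 => 0
  | j+1, 0 => qb q j 0
  | j+1, i+1 => q^(i+1) * qb q j (i+1) + qb q j i

lemma qb_zero (q : ℝ) (j : ℕ) : qb q j 0 = 1 := by
  induction j with
  | zero => rfl
  | succ j ih => rw [qb, ih]

lemma qb_big (q : ℝ) : ∀ j i : ℕ, j < i → qb q j i = 0 := by
  intro j
  induction j with
  | zero => intro i hi; match i, hi with | i+1, _ => rfl
  | succ j ih =>
    intro i hi
    match i, hi with
    | i+1, hi =>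
      rw [qb, ih (i+1) (by omega), ih i (by omega)]
      ring

lemma qb_diag (q : ℝ) (j : ℕ) : qb q j j = 1 := by
  induction j with
  | zero => rfl
  | succ j ih => rw [qb, ih, qb_big q j (j+1) (by omega)]; ring

lemma qb_mul (q : ℝ) : ∀ j i : ℕ, i ≤ j →
    qb q j i * (qPoch q q i * qPoch q q (j-i)) = qPoch q q j := by
  intro j
  induction j with
  | zero => intro i hi; interval_cases i; simp [qb_zero, qPoch_zero]
  | succ j ih =>
    intro i hi
    cases i with
    | zero => simp [qb_zero, qPoch_zero]
    | succ i =>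
      rcases Nat.lt_or_ge i j with hij | hij
      · -- i+1 ≤ j
        have ih1 := ih (i+1) (by omega)
        have ih2 := ih i (by omega)
        have e0 : j + 1 - (i+1) = j - i := by omega
        have e1 : j - i = (j - (i+1)) + 1 := by omega
        rw [qb, e0, e1, qPoch_succ q q (j - (i+1)), qPoch_succ q q j, qPoch_succ q q i]
        rw [e1, qPoch_succ q q (j - (i+1))] at ih2
        rw [qPoch_succ q q i] at ih1
        have hpow : q^(i+1) * q^(j-(i+1)) = q^j := by
          rw [← pow_add]; congr 1; omega
        linear_combination (q^(i+1)*(1 - q*q^(j-(i+1)))) * ih1 + (1 - q*q^i) * ih2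
          - q * qPoch q q j * hpow
      · -- i = j, i+1 = j+1
        have : i = j := by omega
        subst this
        rw [qb_diag]
        have : i + 1 - (i+1) = 0 := by omega
        rw [this, qPoch_zero]
        ring

noncomputable def qbsh (q : ℝ) (j : ℕ) : ℕ → ℝ := fun i =>
  match i with
  | 0 => 0
  | i+1 => qb q j i

lemma qb_rec (q : ℝ) (j i : ℕ) : qb q (j+1) i = q^i * qb q j i + qbsh q j i := by
  cases i with
  | zero => rw [qb]; simp [qbsh, pow_zero]
  | succ i => rw [qb]; rfl

lemma keyid (q z : ℝ) : ∀ (j : ℕ) (a : ℝ),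
    ∑ i ∈ Finset.range (j+1), (-a)^i * q^(Nat.choose i 2) * qb q j i * qPoch z q i *
      qPoch (a*z*q^i) q (j-i) = qPoch a q j := by
  intro j
  induction j with
  | zero =>
    intro a
    simp [qb_zero, qPoch_zero]
  | succ j ih =>
    intro a
    set T1 : ℕ → ℝ := fun i => (-a)^i * q^(Nat.choose i 2) * (q^i * qb q j i) * qPoch z q i *
      qPoch (a*z*q^i) q (j+1-i) with hT1
    set T2 : ℕ → ℝ := fun i => (-a)^i * q^(Nat.choose i 2) * qbsh q j i * qPoch z q i *
      qPoch (a*z*q^i) q (j+1-i) with hT2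
    have hsplit : ∀ i, (-a)^i * q^(Nat.choose i 2) * qb q (j+1) i * qPoch z q i *
        qPoch (a*z*q^i) q (j+1-i) = T1 i + T2 i := by
      intro i
      rw [hT1, hT2, qb_rec]
      ring
    rw [Finset.sum_congr rfl (fun i _ => hsplit i), Finset.sum_add_distrib]
    have hS1 : ∑ i ∈ Finset.range (j+2), T1 i = ∑ i ∈ Finset.range (j+1), T1 i := by
      rw [Finset.sum_range_succ]
      have : qb q j (j+1) = 0 := qb_big q j (j+1) (by omega)
      rw [hT1]
      simp [this]
    have hS2 : ∑ i ∈ Finset.range (j+2), T2 i = ∑ i ∈ Finset.range (j+1), T2 (i+1) := by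
      rw [Finset.sum_range_succ']
      have : T2 0 = 0 := by rw [hT2]; simp [qbsh]
      rw [this, add_zero]
    rw [hS1, hS2, ← Finset.sum_add_distrib]
    have hterm : ∀ i ∈ Finset.range (j+1), T1 i + T2 (i+1) =
        (1-a) * ((-(a*q))^i * q^(Nat.choose i 2) * qb q j i * qPoch z q i *
          qPoch ((a*q)*z*q^i) q (j-i)) := by
      intro i hi
      have hij : i ≤ j := by simpa [Nat.lt_succ_iff] using Finset.mem_range.mp hi
      simp only [hT1, hT2]
      have e0 : j + 1 - i = (j - i) + 1 := by omega
      have e1 : j + 1 - (i+1) = j - i := by omega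
      have e2 : qbsh q j (i+1) = qb q j i := rfl
      have e3 : Nat.choose (i+1) 2 = Nat.choose i 2 + i := by
        rw [Nat.choose_succ_succ, Nat.choose_one_right, Nat.add_comm]
      have e4 : a*z*q^i*q = (a*q)*z*q^i := by ring
      have e5 : a*z*q^(i+1) = (a*q)*z*q^i := by rw [pow_succ]; ring
      have e6 : (-(a*q))^i = (-a)^i * q^i := by
        rw [show -(a*q) = (-a)*q by ring, mul_pow]
      rw [e0, qPoch_succ' (a*z*q^i) q (j-i), e4, e1, e2, e3, pow_add q, e5,
        qPoch_succ z q i, e6]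
      ring
    rw [Finset.sum_congr rfl hterm, ← Finset.mul_sum, ih (a*q), qPoch_succ']

lemma kOp_iter (p : ℝ) (k : ℕ) (v : ℕ → ℂ) (n : ℕ) :
    (kOp p)^[k] v n = ((p : ℂ) ^ n * ((Real.sqrt p : ℝ) : ℂ))^k * v n := by
  induction k with
  | zero => simp
  | succ k ih =>
    rw [Function.iterate_succ_apply', kOp, ih, pow_succ]
    ring

lemma aPlus_iter_zero (p : ℝ) (v : ℕ → ℂ) : ∀ k n, n < k → (aPlus p)^[k] v n = 0 := by
  intro k
  induction k with
  | zero => omega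
  | succ k ih =>
    intro n hn
    rw [Function.iterate_succ_apply']
    cases n with
    | zero => rfl
    | succ n =>
      show ((Real.sqrt (1 - p ^ (2 * n + 2)) : ℝ) : ℂ) * (aPlus p)^[k] v n = 0
      rw [ih n (by omega), mul_zero]

lemma aPlus_iter (p : ℝ) (v : ℕ → ℂ) : ∀ (k l : ℕ), (aPlus p)^[k] v (l + k) =
    (∏ i ∈ Finset.Ico l (l+k), ((Real.sqrt (1 - p ^ (2*i + 2)) : ℝ) : ℂ)) * v l := by
  intro k
  induction k with
  | zero => intro l; simp
  | succ k ih =>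
    intro l
    have h1 : l + (k+1) = (l + k) + 1 := by omega
    rw [h1, Function.iterate_succ_apply']
    show ((Real.sqrt (1 - p ^ (2 * (l+k) + 2)) : ℝ) : ℂ) * (aPlus p)^[k] v (l+k) = _
    rw [ih l, Finset.prod_Ico_succ_top (by omega : l ≤ l + k)]
    ring

lemma chi2_even (p x : ℝ) (r : ℕ) : chi2 p x (2*r) =
    ((x^r * Real.sqrt (qPoch (p^2) (p^2) (2*r)) / qPoch (p^4) (p^4) r : ℝ) : ℂ) := by
  have h1 : 2*r % 2 = 0 := Nat.mul_mod_right 2 r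
  have h2 : 2*r / 2 = r := Nat.mul_div_cancel_left r (by norm_num)
  rw [chi2]
  simp only [h1, if_pos, h2]
  push_cast
  ring

lemma chi2_odd (p x : ℝ) (n : ℕ) (h : n % 2 = 1) : chi2 p x n = 0 := by
  rw [chi2]
  simp [h]

lemma prod_sqrt {ι : Type*} (s : Finset ι) (f : ι → ℝ) (h : ∀ i ∈ s, 0 ≤ f i) :
    ∏ i ∈ s, Real.sqrt (f i) = Real.sqrt (∏ i ∈ s, f i) := by
  induction s using Finset.cons_induction with
  | empty => simp
  | cons a s ha ih =>
    rw [Finset.prod_cons, Finset.prod_cons, ih (fun i hi => h i (by simp [hi])),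
      Real.sqrt_mul (h a (by simp))]

lemma haA (p : ℝ) (r : ℕ) : qPoch (p^2) (p^2) (2*r) = ∏ i ∈ Finset.range (2*r), (1 - p^(2*i+2)) := by
  apply Finset.prod_congr rfl
  intro i _
  rw [← pow_mul, ← pow_add]
  congr 2
  omega

lemma A_split (p : ℝ) (r : ℕ) :
    qPoch (p^2) (p^2) (2*r) = qPoch (p^2) (p^4) r * qPoch (p^4) (p^4) r := by
  induction r with
  | zero => simp [qPoch_zero]
  | succ r ih =>
    have h1 : 2*(r+1) = (2*r + 1) + 1 := by omega
    rw [h1, qPoch_succ, qPoch_succ, ih, qPoch_succ (p^2) (p^4) r, qPoch_succ (p^4) (p^4) r]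
    have e1 : (p^2 : ℝ) * (p^2)^(2*r) = p^2 * (p^4)^r := by
      rw [← pow_mul, ← pow_mul]; congr 2; omega
    have e2 : (p^2 : ℝ) * (p^2)^(2*r+1) = p^4 * (p^4)^r := by
      rw [← pow_mul, ← pow_mul, ← pow_add, ← pow_add]; congr 1; omega
    rw [e1, e2]
    ring

lemma one_sub_pow_pos (p : ℝ) (hp : 0 ≤ p) (hp1 : p < 1) (k : ℕ) (hk : 1 ≤ k) :
    0 < 1 - p^k := by
  have : p^k < 1 := pow_lt_one₀ hp hp1 (by omega)
  linarith

lemma pair_eval (p x : ℝ) (hp : 0 < p) (hp1 : p < 1) (hx0 : 0 ≤ x) (hx1 : x < 1) (j m : ℕ) :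
    pairF (chi2 p x) ((aPlus p)^[2*j] ((kOp p)^[2*m] (chi2 p 1))) =
      ((x^j * p^m * qPoch (p^2) (p^4) j *
        fSum (p^2 * (p^4)^j) (p^4) ((p^4)^m * x) : ℝ) : ℂ) := by
  set w := (aPlus p)^[2*j] ((kOp p)^[2*m] (chi2 p 1)) with hw
  set F : ℕ → ℂ := fun n => chi2 p x n * w n with hF
  have hinj : Function.Injective (fun l : ℕ => 2*l + 2*j) := by
    intro a b hab; simp only [] at hab; omega
  have hsupp : Function.support F ⊆ Set.range (fun l : ℕ => 2*l + 2*j) := by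
    intro n hn
    simp only [Function.mem_support, hF] at hn
    rcases Nat.even_or_odd n with he | ho
    · obtain ⟨r, hr⟩ := he
      have hn2 : n = 2*r := by omega
      by_cases hrj : r < j
      · exfalso
        apply hn
        have : w n = 0 := by
          rw [hw]
          exact aPlus_iter_zero p _ (2*j) n (by omega)
        rw [this, mul_zero]
      · exact ⟨r - j, by simp only []; omega⟩
    · exfalso
      apply hn
      rw [chi2_odd p x n (Nat.odd_iff.mp ho), zero_mul]
  -- basic positivity
  have hp2 : (0:ℝ) < p^2 := by positivity
  have hp21 : p^2 < 1 := pow_lt_one₀ hp.le hp1 (by omega)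
  have hp4 : (0:ℝ) < p^4 := by positivity
  have hp41 : p^4 < 1 := pow_lt_one₀ hp.le hp1 (by omega)
  have hterm : ∀ l : ℕ, F (2*l + 2*j) =
      ((x^j * p^m * qPoch (p^2) (p^4) j * gTerm (p^2 * (p^4)^j) (p^4) ((p^4)^m * x) l : ℝ) : ℂ) := by
    intro l
    have e1 : (2*l + 2*j : ℕ) = 2*l + 2*j := rfl
    have hap : w (2*l + 2*j) =
        (∏ i ∈ Finset.Ico (2*l) (2*l + 2*j), ((Real.sqrt (1 - p ^ (2*i + 2)) : ℝ) : ℂ)) *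
          ((kOp p)^[2*m] (chi2 p 1)) (2*l) := by
      rw [hw]
      exact aPlus_iter p _ (2*j) (2*l)
    have hk : ((kOp p)^[2*m] (chi2 p 1)) (2*l) =
        ((p : ℂ) ^ (2*l) * ((Real.sqrt p : ℝ) : ℂ))^(2*m) * chi2 p 1 (2*l) :=
      kOp_iter p (2*m) _ (2*l)
    have h2lj : 2*l + 2*j = 2*(l+j) := by omega
    have hchi1 : chi2 p x (2*(l+j)) =
        ((x^(l+j) * Real.sqrt (qPoch (p^2) (p^2) (2*(l+j))) / qPoch (p^4) (p^4) (l+j) : ℝ) : ℂ) :=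
      chi2_even p x (l+j)
    have hchi2 : chi2 p 1 (2*l) =
        (((1:ℝ)^l * Real.sqrt (qPoch (p^2) (p^2) (2*l)) / qPoch (p^4) (p^4) l : ℝ) : ℂ) :=
      chi2_even p 1 l
    -- assemble complex as cast of real
    have hcast : F (2*l + 2*j) =
        (((x^(l+j) * Real.sqrt (qPoch (p^2) (p^2) (2*(l+j))) / qPoch (p^4) (p^4) (l+j)) *
          ((∏ i ∈ Finset.Ico (2*l) (2*l + 2*j), Real.sqrt (1 - p ^ (2*i + 2))) *
          ((p^(2*l) * Real.sqrt p)^(2*m) *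
          ((1:ℝ)^l * Real.sqrt (qPoch (p^2) (p^2) (2*l)) / qPoch (p^4) (p^4) l))) : ℝ) : ℂ) := by
      rw [hF]
      simp only []
      rw [hap, hk, h2lj, hchi1, hchi2]
      push_cast
      ring
    rw [hcast]
    norm_cast
    -- now a real identity
    have hQj := qPoch_pos hp4.le hp41 hp4.le hp41.le (l+j)
    have hQl := qPoch_pos hp4.le hp41 hp4.le hp41.le l
    -- sqrt combination
    have hfnn : ∀ i ∈ Finset.range (2*(l+j)), (0:ℝ) ≤ 1 - p^(2*i+2) := by
      intro i _
      exact (one_sub_pow_pos p hp.le hp1 _ (by omega)).le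
    have hsq : ∀ r : ℕ, Real.sqrt (qPoch (p^2) (p^2) (2*r)) =
        ∏ i ∈ Finset.range (2*r), Real.sqrt (1 - p^(2*i+2)) := by
      intro r
      rw [haA, prod_sqrt _ _ (fun i _ => (one_sub_pow_pos p hp.le hp1 (2*i+2) (by omega)).le)]
    have hcomb : Real.sqrt (qPoch (p^2) (p^2) (2*l)) *
        (∏ i ∈ Finset.Ico (2*l) (2*l + 2*j), Real.sqrt (1 - p^(2*i+2))) =
        Real.sqrt (qPoch (p^2) (p^2) (2*(l+j))) := by
      rw [hsq, hsq, Finset.range_eq_Ico]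
      rw [show 2*(l+j) = 2*l + 2*j by omega, Finset.range_eq_Ico]
      exact Finset.prod_Ico_consecutive (fun i => Real.sqrt (1 - p^(2*i+2))) (m := 0) (n := 2*l) (k := 2*l + 2*j) (by omega) (by omega)
    have hA : Real.sqrt (qPoch (p^2) (p^2) (2*(l+j))) * Real.sqrt (qPoch (p^2) (p^2) (2*(l+j))) =
        qPoch (p^2) (p^4) (l+j) * qPoch (p^4) (p^4) (l+j) := by
      rw [Real.mul_self_sqrt (qPoch_pos hp2.le hp21 hp2.le hp21.le _).le, A_split]
    have hsplitj : qPoch (p^2) (p^4) (l+j) =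
        qPoch (p^2) (p^4) j * qPoch (p^2 * (p^4)^j) (p^4) l := by
      rw [show l + j = j + l by omega]
      exact qPoch_add _ _ _ _
    have hK : (p^(2*l) * Real.sqrt p)^(2*m) = ((p^4)^m)^l * p^m := by
      have h1 : (Real.sqrt p)^(2*m) = p^m := by rw [pow_mul, Real.sq_sqrt hp.le]
      calc (p^(2*l) * Real.sqrt p)^(2*m) = (p^(2*l))^(2*m) * (Real.sqrt p)^(2*m) := mul_pow _ _ _
        _ = p^(2*l*(2*m)) * p^m := by rw [← pow_mul, h1]
        _ = p^(4*(m*l)) * p^m := by rw [show 2*l*(2*m) = 4*(m*l) from by ring]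
        _ = ((p^4)^m)^l * p^m := by rw [← pow_mul, ← pow_mul]
    rw [gTerm, one_pow, hK]
    rw [mul_pow ((p^4)^m) x l]
    have hprod : Real.sqrt (qPoch (p^2) (p^2) (2*(l+j))) *
        ((∏ i ∈ Finset.Ico (2*l) (2*l + 2*j), Real.sqrt (1 - p^(2*i+2))) *
          Real.sqrt (qPoch (p^2) (p^2) (2*l))) =
        qPoch (p^2) (p^4) j * qPoch (p^2 * (p^4)^j) (p^4) l * qPoch (p^4) (p^4) (l+j) := by
      rw [show Real.sqrt (qPoch (p^2) (p^2) (2*(l+j))) *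
        ((∏ i ∈ Finset.Ico (2*l) (2*l + 2*j), Real.sqrt (1 - p^(2*i+2))) *
          Real.sqrt (qPoch (p^2) (p^2) (2*l))) =
        (Real.sqrt (qPoch (p^2) (p^2) (2*l)) *
          (∏ i ∈ Finset.Ico (2*l) (2*l + 2*j), Real.sqrt (1 - p^(2*i+2)))) *
          Real.sqrt (qPoch (p^2) (p^2) (2*(l+j))) from by ring, hcomb, hA, hsplitj]
    field_simp
    linear_combination x^(l+j) * hprod
  calc pairF (chi2 p x) w = ∑' n, F n := rfl
    _ = ∑' l, F (2*l + 2*j) := (hinj.tsum_eq hsupp).symm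
    _ = ∑' l, ((x^j * p^m * qPoch (p^2) (p^4) j *
          gTerm (p^2 * (p^4)^j) (p^4) ((p^4)^m * x) l : ℝ) : ℂ) := tsum_congr hterm
    _ = ((∑' l, x^j * p^m * qPoch (p^2) (p^4) j *
          gTerm (p^2 * (p^4)^j) (p^4) ((p^4)^m * x) l : ℝ) : ℂ) := (Complex.ofReal_tsum _).symm
    _ = ((x^j * p^m * qPoch (p^2) (p^4) j *
          fSum (p^2 * (p^4)^j) (p^4) ((p^4)^m * x) : ℝ) : ℂ) := by
        rw [show (fun l => x^j * p^m * qPoch (p^2) (p^4) j *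
          gTerm (p^2 * (p^4)^j) (p^4) ((p^4)^m * x) l) = (fun l =>
          (x^j * p^m * qPoch (p^2) (p^4) j) *
          gTerm (p^2 * (p^4)^j) (p^4) ((p^4)^m * x) l) from rfl, tsum_mul_left]
        rfl

lemma choose_exp_nat : ∀ i : ℕ, 4 * Nat.choose i 2 + 2*i = 2*i^2 := by
  intro i
  induction i with
  | zero => rfl
  | succ i ih =>
    have h1 : Nat.choose (i+1) 2 = i + Nat.choose i 2 := by
      rw [Nat.choose_succ_succ, Nat.choose_one_right]
    have h2 : (i+1)^2 = i^2 + 2*i + 1 := by ring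
    omega

lemma choose_exp (p : ℝ) (hp : 0 < p) (i : ℕ) :
    (-(p^2))^i * (p^4)^(Nat.choose i 2) = (-1)^i * p^(2*i^2) := by
  calc (-(p^2))^i * (p^4)^(Nat.choose i 2)
      = ((-1)^i * (p^2)^i) * (p^4)^(Nat.choose i 2) := by rw [neg_pow]
    _ = (-1)^i * (p^(2*i) * p^(4*Nat.choose i 2)) := by rw [← pow_mul, ← pow_mul]; ring
    _ = (-1)^i * p^(2*i + 4*Nat.choose i 2) := by rw [← pow_add]
    _ = (-1)^i * p^(2*i^2) := by rw [show 2*i + 4*Nat.choose i 2 = 2*i^2 from by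
          have := choose_exp_nat i; omega]

lemma finalid (p x : ℝ) (hp : 0 < p) (hp1 : p < 1) (hx : 0 < x) (hx1 : x < 1) (j m : ℕ) :
    qPoch (p^2) (p^4) j * qPoch x (p^4) m / qPoch (p^2*x) (p^4) (j+m) =
    ∑ i ∈ Finset.range (j+1), (-1)^i * p^(2*i^2) * qPoch (p^4) (p^4) j * qPoch x (p^4) (m+i) /
      (qPoch (p^4) (p^4) i * qPoch (p^4) (p^4) (j-i) * qPoch (x*p^2) (p^4) (m+i)) := by
  have hp2 : (0:ℝ) < p^2 := by positivity
  have hp21 : p^2 < 1 := pow_lt_one₀ hp.le hp1 (by omega)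
  have hp4 : (0:ℝ) < p^4 := by positivity
  have hp41 : p^4 < 1 := pow_lt_one₀ hp.le hp1 (by omega)
  have key := keyid (p^4) (x*(p^4)^m) j (p^2)
  rw [← key, Finset.sum_mul, Finset.sum_div]
  apply Finset.sum_congr rfl
  intro i hi
  have hij : i ≤ j := by simpa [Nat.lt_succ_iff] using Finset.mem_range.mp hi
  have hQi := qPoch_pos hp4.le hp41 hp4.le hp41.le i
  have hQji := qPoch_pos hp4.le hp41 hp4.le hp41.le (j-i)
  have hQj := qPoch_pos hp4.le hp41 hp4.le hp41.le j
  have hxp0 : (0:ℝ) ≤ x*p^2 := by positivity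
  have hxp1 : x*p^2 < 1 := by nlinarith
  have hPmi := qPoch_pos (by positivity : (0:ℝ) ≤ p^2*x) (by nlinarith : p^2*x < 1)
    hp4.le hp41.le (m+i)
  have hz0 : (0:ℝ) ≤ p^2*(x*(p^4)^m)*(p^4)^i := by positivity
  have hz1 : p^2*(x*(p^4)^m)*(p^4)^i < 1 := by
    have e1 : (p^4)^m ≤ 1 := pow_le_one₀ hp4.le hp41.le
    have e2 : (p^4)^i ≤ 1 := pow_le_one₀ hp4.le hp41.le
    have e3 : (0:ℝ) ≤ (p^4)^m := by positivity
    have e4 : (0:ℝ) ≤ (p^4)^i := by positivity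
    have b1 : x*(p^4)^m ≤ x := by nlinarith
    have b2 : p^2*(x*(p^4)^m) ≤ x*(p^4)^m := by nlinarith [mul_nonneg hx.le e3]
    have b3 : p^2*(x*(p^4)^m)*(p^4)^i ≤ p^2*(x*(p^4)^m) := by
      nlinarith [mul_nonneg (mul_nonneg hp2.le (mul_nonneg hx.le e3))
        (by linarith : (0:ℝ) ≤ 1 - (p^4)^i)]
    linarith
  have hW := qPoch_pos hz0 hz1 hp4.le hp41.le (j-i)
  have f1 : qPoch x (p^4) (m+i) = qPoch x (p^4) m * qPoch (x*(p^4)^m) (p^4) i :=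
    qPoch_add _ _ _ _
  have f2 : qPoch (p^2*x) (p^4) (j+m) = qPoch (p^2*x) (p^4) (m+i) *
      qPoch (p^2*(x*(p^4)^m)*(p^4)^i) (p^4) (j-i) := by
    rw [show j+m = (m+i)+(j-i) by omega, qPoch_add]
    congr 2
    rw [pow_add]
    ring
  have f4 : qb (p^4) j i * (qPoch (p^4) (p^4) i * qPoch (p^4) (p^4) (j-i)) =
      qPoch (p^4) (p^4) j := qb_mul (p^4) j i hij
  have f5 := choose_exp p hp i
  have fc : qPoch (x*p^2) (p^4) (m+i) = qPoch (p^2*x) (p^4) (m+i) := by rw [mul_comm x (p^2)]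
  rw [fc, f2, f1]
  rw [div_eq_div_iff (by positivity) (by positivity)]
  linear_combination (qb (p^4) j i * qPoch (x*(p^4)^m) (p^4) i *
      qPoch (p^2*(x*(p^4)^m)*(p^4)^i) (p^4) (j-i) * qPoch x (p^4) m *
      qPoch (p^4) (p^4) i * qPoch (p^4) (p^4) (j-i) * qPoch (p^2*x) (p^4) (m+i)) * f5 +
    ((-1)^i * p^(2*i^2) * qPoch (x*(p^4)^m) (p^4) i *
      qPoch (p^2*(x*(p^4)^m)*(p^4)^i) (p^4) (j-i) * qPoch x (p^4) m *
      qPoch (p^2*x) (p^4) (m+i)) * f4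

/-- `⟨(a⁺)^{2j} k^{2m}⟩₂₂ = x^j p^m Σ_{i=0}^j (-1)^i p^{2i²}
(p⁴;p⁴)_j (x;p⁴)_{m+i} / ((p⁴;p⁴)_i (p⁴;p⁴)_{j-i} (xp²;p⁴)_{m+i})`,
where `⟨𝒪⟩₂₂ = ⟨χ̄₂(x)|𝒪|χ₂(1)⟩/⟨χ̄₂(x)|χ₂(1)⟩`. -/
theorem bracket22_aPlus (p x : ℝ) (hp : 0 < p) (hp1 : p < 1) (hx : 0 < x) (hx1 : x < 1)
    (j m : ℕ) :
    pairF (chi2 p x) ((aPlus p)^[2 * j] ((kOp p)^[2 * m] (chi2 p 1))) /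
        pairF (chi2 p x) (chi2 p 1) =
      (x : ℂ) ^ j * (p : ℂ) ^ m *
        ∑ i ∈ Finset.range (j + 1),
          (-1 : ℂ) ^ i * (p : ℂ) ^ (2 * i ^ 2) *
            ((qPoch (p ^ 4) (p ^ 4) j : ℝ) : ℂ) * ((qPoch x (p ^ 4) (m + i) : ℝ) : ℂ) /
            (((qPoch (p ^ 4) (p ^ 4) i : ℝ) : ℂ) * ((qPoch (p ^ 4) (p ^ 4) (j - i) : ℝ) : ℂ) *
              ((qPoch (x * p ^ 2) (p ^ 4) (m + i) : ℝ) : ℂ)) := by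
  have hp2 : (0:ℝ) < p^2 := by positivity
  have hp21 : p^2 < 1 := pow_lt_one₀ hp.le hp1 (by omega)
  have hp4 : (0:ℝ) < p^4 := by positivity
  have hp41 : p^4 < 1 := pow_lt_one₀ hp.le hp1 (by omega)
  have hNum := pair_eval p x hp hp1 hx.le hx1 j m
  have hDen0 := pair_eval p x hp hp1 hx.le hx1 0 0
  simp only [Nat.mul_zero, Function.iterate_zero_apply, pow_zero, one_mul, mul_one,
    qPoch_zero] at hDen0
  have hD1 : 1 ≤ fSum (p^2) (p^4) x := fSum_ge_one hp2.le hp21 hp4 hp41 hx.le hx1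
  have hD0 : fSum (p^2) (p^4) x ≠ 0 := by linarith
  have hEval := fSum_eval hp2.le hp21 hp4 hp41 hx.le hx1 j m
  have hPjm : 0 < qPoch (p^2*x) (p^4) (j+m) :=
    qPoch_pos (by positivity) (by nlinarith) hp4.le hp41.le _
  have hfs2 : fSum (p^2*(p^4)^j) (p^4) ((p^4)^m * x) =
      qPoch x (p^4) m * fSum (p^2) (p^4) x / qPoch (p^2*x) (p^4) (j+m) := by
    rw [eq_div_iff hPjm.ne']
    linear_combination -hEval
  have hreal : (x^j * p^m * qPoch (p^2) (p^4) j * fSum (p^2*(p^4)^j) (p^4) ((p^4)^m*x)) /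
      fSum (p^2) (p^4) x =
      x^j * p^m * (qPoch (p^2) (p^4) j * qPoch x (p^4) m / qPoch (p^2*x) (p^4) (j+m)) := by
    rw [hfs2]
    field_simp
  rw [hNum, hDen0, ← Complex.ofReal_div, hreal, finalid p x hp hp1 hx hx1 j m]
  push_cast
  rfl
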